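/- Let p, κ be positive integers and let A_κ be the set of probability measures P on ℤ^p such that E_P[ ∑_{i=1}^p |X_i| ] ≤ κ, where X = (X_1,…,X_p) has law P. If (P_n) is a sequence in A_κ converging weakly to P ∈ A_κ, then the Shannon entropies converge: H(P_n) → H(P). In other words, the map P ↦ H(P) is continuous on A_κ for the weak topology. -/

import Mathlib

open Filter

private lemma aux_neg_mul_log_le (t s : ℝ) (ht : 0 ≤ t) :
    -(t * Real.log t) ≤ s * t + Real.exp (-1 - s) := by
  rcases eq_or_lt_of_le ht with h | h
  · simp [← h]
    positivity
  · have h1 : -Real.log t - s ≤ Real.exp (-Real.log t - s - 1) := by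
      have := Real.add_one_le_exp (-Real.log t - s - 1)
      linarith
    have h2 : Real.exp (-Real.log t - s - 1) = Real.exp (-1 - s) * t⁻¹ := by
      rw [show -Real.log t - s - 1 = (-1 - s) + -Real.log t by ring, Real.exp_add,
        Real.exp_neg, Real.exp_log h]
    rw [h2] at h1
    have h3 : (-Real.log t - s) * t ≤ Real.exp (-1 - s) := by
      have h4 := mul_le_mul_of_nonneg_right h1 ht
      rwa [mul_assoc, inv_mul_cancel₀ (ne_of_gt h), mul_one] at h4
    nlinarith

private lemma aux_summable_prod {c : ℤ → ℝ} (hc0 : ∀ k, 0 ≤ c k) (hc : Summable c)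
    (m : ℕ) : Summable (fun x : Fin m → ℤ => ∏ i, c (x i)) := by
  induction m with
  | zero =>
      simp only [Finset.univ_eq_empty, Finset.prod_empty]
      exact Summable.of_finite
  | succ m ih =>
      have hmul : Summable (fun y : ℤ × (Fin m → ℤ) => c y.1 * ∏ i, c (y.2 i)) :=
        Summable.mul_of_nonneg (f := c) (g := fun x : Fin m → ℤ => ∏ i, c (x i)) hc ih
          (fun k => hc0 k) (fun x => Finset.prod_nonneg fun i _ => hc0 _)
      have hmul' : Summable (fun y : ℤ × (Fin m → ℤ) => ∏ i, c (Fin.cons (α := fun _ : Fin (m + 1) => ℤ) y.1 y.2 i)) := by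
        simpa [Fin.prod_univ_succ] using hmul
      exact ((Fin.consEquiv fun _ : Fin (m + 1) => ℤ)).summable_iff.mp hmul'

private lemma aux_summable_exp_int {l : ℝ} (hl : 0 < l) :
    Summable (fun k : ℤ => Real.exp (-(l * |(k : ℝ)|))) := by
  have key : Summable (fun n : ℕ => Real.exp ((n : ℝ) * (-l))) :=
    Real.summable_exp_nat_mul_iff.mpr (by linarith)
  apply Summable.of_nat_of_neg <;>
  · refine key.congr fun n => ?_
    congr 1
    push_cast [abs_neg, Nat.abs_cast]
    ring

private lemma aux_summable_g (p : ℕ) {l : ℝ} (hl : 0 < l) :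
    Summable (fun x : Fin p → ℤ => Real.exp (-1 - l * ∑ i, |(x i : ℝ)|)) := by
  have hc0 : ∀ k : ℤ, 0 ≤ Real.exp (-(l * |(k : ℝ)|)) := fun k => (Real.exp_pos _).le
  have hprod := aux_summable_prod hc0 (aux_summable_exp_int hl) p
  have := hprod.mul_left (Real.exp (-1))
  refine this.congr fun x => ?_
  rw [← Real.exp_sum, ← Real.exp_add]
  congr 1
  rw [Finset.sum_neg_distrib, ← Finset.mul_sum]
  ring

private lemma aux_summable_ent (p : ℕ) {q : (Fin p → ℤ) → ℝ} (hq0 : ∀ x, 0 ≤ q x)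
    (hq1 : ∀ x, q x ≤ 1) (hmom : Summable fun x : Fin p → ℤ => q x * ∑ i, |(x i : ℝ)|) :
    Summable (fun x : Fin p → ℤ => -(q x * Real.log (q x))) := by
  have hg := aux_summable_g p (l := 1) one_pos
  simp only [one_mul] at hg
  have hmom' : Summable fun x : Fin p → ℤ => (∑ i, |(x i : ℝ)|) * q x := by
    simpa [mul_comm] using hmom
  refine Summable.of_nonneg_of_le (fun x => ?_) (fun x => ?_) (hmom'.add hg)
  · have hlog : Real.log (q x) ≤ 0 := Real.log_nonpos (hq0 x) (hq1 x)
    have := mul_nonpos_of_nonneg_of_nonpos (hq0 x) hlog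
    linarith
  · exact aux_neg_mul_log_le (q x) (∑ i, |(x i : ℝ)|) (hq0 x)

/-- Let `p, κ` be positive integers and `A_κ` the set of probability
measures `P` on `ℤ^p` with `E_P[∑_i |X_i|] ≤ κ`.  If `(P_n) ⊆ A_κ` converges weakly
(pointwise) to `P ∈ A_κ`, then the Shannon entropies converge: `H(P_n) → H(P)`. -/
theorem stmt_7 (p κ : ℕ) (hp : 0 < p) (hκ : 0 < κ)
    (Pn : ℕ → (Fin p → ℤ) → ℝ) (P : (Fin p → ℤ) → ℝ)
    (hPn0 : ∀ n x, 0 ≤ Pn n x) (hPn1 : ∀ n, ∑' x, Pn n x = 1)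
    (hPnmom : ∀ n, Summable (fun x : Fin p → ℤ => Pn n x * ∑ i, |(x i : ℝ)|))
    (hPnκ : ∀ n, ∑' x : Fin p → ℤ, Pn n x * ∑ i, |(x i : ℝ)| ≤ κ)
    (hP0 : ∀ x, 0 ≤ P x) (hP1 : ∑' x, P x = 1)
    (hPmom : Summable (fun x : Fin p → ℤ => P x * ∑ i, |(x i : ℝ)|))
    (hPκ : ∑' x : Fin p → ℤ, P x * ∑ i, |(x i : ℝ)| ≤ κ)
    (hconv : ∀ x, Tendsto (fun n => Pn n x) atTop (nhds (P x))) :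
    Tendsto (fun n => ∑' x : Fin p → ℤ, -(Pn n x * Real.log (Pn n x)))
      atTop (nhds (∑' x : Fin p → ℤ, -(P x * Real.log (P x)))) := by
  classical
  have hw0 : ∀ x : Fin p → ℤ, 0 ≤ ∑ i, |(x i : ℝ)| :=
    fun x => Finset.sum_nonneg fun i _ => abs_nonneg _
  have hent0 : ∀ q : ℝ, 0 ≤ q → q ≤ 1 → 0 ≤ -(q * Real.log q) := by
    intro q h0 h1
    have := mul_nonpos_of_nonneg_of_nonpos h0 (Real.log_nonpos h0 h1)
    linarith
  have hPnsum : ∀ n, Summable (Pn n) := by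
    intro n
    by_contra h
    have := hPn1 n
    rw [tsum_eq_zero_of_not_summable h] at this
    norm_num at this
  have hPsum : Summable P := by
    by_contra h
    rw [tsum_eq_zero_of_not_summable h] at hP1
    norm_num at hP1
  have hPn1le : ∀ n x, Pn n x ≤ 1 := fun n x =>
    (hPn1 n) ▸ Summable.le_tsum (hPnsum n) x fun j _ => hPn0 n j
  have hP1le : ∀ x, P x ≤ 1 := fun x =>
    hP1 ▸ Summable.le_tsum hPsum x fun j _ => hP0 j
  have hfsum : ∀ n, Summable (fun x : Fin p → ℤ => -(Pn n x * Real.log (Pn n x))) :=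
    fun n => aux_summable_ent p (hPn0 n) (hPn1le n) (hPnmom n)
  have hFsum : Summable (fun x : Fin p → ℤ => -(P x * Real.log (P x))) :=
    aux_summable_ent p hP0 hP1le hPmom
  rw [Metric.tendsto_atTop]
  intro ε hε
  have hκR : (0 : ℝ) < κ := by exact_mod_cast hκ
  set l : ℝ := ε / (8 * κ) with hldef
  have hl : 0 < l := by positivity
  have hg := aux_summable_g p hl
  obtain ⟨A, hA⟩ := ((tendsto_tsum_compl_atTop_zero
      (fun x : Fin p → ℤ => Real.exp (-1 - l * ∑ i, |(x i : ℝ)|))).eventually_lt_const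
      (show (0 : ℝ) < ε / 8 by positivity)).exists
  -- uniform tail bound
  have key : ∀ q : (Fin p → ℤ) → ℝ, (∀ x, 0 ≤ q x) → (∀ x, q x ≤ 1) →
      Summable (fun x : Fin p → ℤ => q x * ∑ i, |(x i : ℝ)|) →
      (∑' x : Fin p → ℤ, q x * ∑ i, |(x i : ℝ)|) ≤ κ →
      ∑' x : {x : Fin p → ℤ // x ∉ A}, -(q x.1 * Real.log (q x.1)) ≤ ε / 4 := by
    intro q h0 h1 hm hmκ
    have hent := aux_summable_ent p h0 h1 hm
    have hb : ∀ x : {x : Fin p → ℤ // x ∉ A}, -(q x.1 * Real.log (q x.1)) ≤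
        l * (q x.1 * ∑ i, |(x.1 i : ℝ)|) + Real.exp (-1 - l * ∑ i, |(x.1 i : ℝ)|) := by
      intro x
      have h2 := aux_neg_mul_log_le (q x.1) (l * ∑ i, |(x.1 i : ℝ)|) (h0 x.1)
      have h3 : (l * ∑ i, |(x.1 i : ℝ)|) * q x.1 = l * (q x.1 * ∑ i, |(x.1 i : ℝ)|) := by
        ring
      linarith
    have hs1 : Summable (fun x : {x : Fin p → ℤ // x ∉ A} =>
        l * (q x.1 * ∑ i, |(x.1 i : ℝ)|)) := (hm.subtype _).mul_left l
    have hs2 : Summable (fun x : {x : Fin p → ℤ // x ∉ A} =>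
        Real.exp (-1 - l * ∑ i, |(x.1 i : ℝ)|)) := hg.subtype _
    have h5 := Summable.tsum_le_tsum hb (hent.subtype _) (hs1.add hs2)
    rw [Summable.tsum_add hs1 hs2, tsum_mul_left] at h5
    have h6 : ∑' x : {x : Fin p → ℤ // x ∉ A}, q x.1 * ∑ i, |(x.1 i : ℝ)| ≤
        ∑' x : Fin p → ℤ, q x * ∑ i, |(x i : ℝ)| :=
      Summable.tsum_le_tsum_of_inj Subtype.val Subtype.val_injective
        (fun c _ => mul_nonneg (h0 c) (hw0 c)) (fun b => le_rfl) (hm.subtype _) hm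
    have h7 : l * (∑' x : {x : Fin p → ℤ // x ∉ A}, q x.1 * ∑ i, |(x.1 i : ℝ)|) ≤
        l * κ := mul_le_mul_of_nonneg_left (h6.trans hmκ) hl.le
    have h8 : l * (κ : ℝ) = ε / 8 := by
      rw [hldef]
      field_simp
    linarith [hA]
  have hTn : ∀ n, 0 ≤ ∑' x : {x : Fin p → ℤ // x ∉ A}, -(Pn n x.1 * Real.log (Pn n x.1)) :=
    fun n => tsum_nonneg fun x => hent0 _ (hPn0 n x.1) (hPn1le n x.1)
  have hT0 : 0 ≤ ∑' x : {x : Fin p → ℤ // x ∉ A}, -(P x.1 * Real.log (P x.1)) :=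
    tsum_nonneg fun x => hent0 _ (hP0 x.1) (hP1le x.1)
  have hTnle : ∀ n, ∑' x : {x : Fin p → ℤ // x ∉ A},
      -(Pn n x.1 * Real.log (Pn n x.1)) ≤ ε / 4 :=
    fun n => key (Pn n) (hPn0 n) (hPn1le n) (hPnmom n) (hPnκ n)
  have hTle : ∑' x : {x : Fin p → ℤ // x ∉ A}, -(P x.1 * Real.log (P x.1)) ≤ ε / 4 :=
    key P hP0 hP1le hPmom hPκ
  -- convergence of the finite part
  have hSconv : Tendsto (fun n => ∑ x ∈ A, -(Pn n x * Real.log (Pn n x))) atTop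
      (nhds (∑ x ∈ A, -(P x * Real.log (P x)))) := by
    refine tendsto_finset_sum A fun x _ => ?_
    exact ((Real.continuous_mul_log.neg).tendsto (P x)).comp (hconv x)
  rw [Metric.tendsto_atTop] at hSconv
  obtain ⟨N, hN⟩ := hSconv (ε / 8) (by positivity)
  refine ⟨N, fun n hn => ?_⟩
  have hdec1 : (∑ x ∈ A, -(Pn n x * Real.log (Pn n x))) +
      ∑' x : {x : Fin p → ℤ // x ∉ A}, -(Pn n x.1 * Real.log (Pn n x.1)) =
      ∑' x : Fin p → ℤ, -(Pn n x * Real.log (Pn n x)) := Summable.sum_add_tsum_compl (hfsum n)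
  have hdec2 : (∑ x ∈ A, -(P x * Real.log (P x))) +
      ∑' x : {x : Fin p → ℤ // x ∉ A}, -(P x.1 * Real.log (P x.1)) =
      ∑' x : Fin p → ℤ, -(P x * Real.log (P x)) := Summable.sum_add_tsum_compl hFsum
  have h9 : |(∑ x ∈ A, -(Pn n x * Real.log (Pn n x))) -
      ∑ x ∈ A, -(P x * Real.log (P x))| < ε / 8 := by
    have := hN n hn
    rwa [Real.dist_eq] at this
  rw [Real.dist_eq, ← hdec1, ← hdec2]
  set Sn := ∑ x ∈ A, -(Pn n x * Real.log (Pn n x))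
  set S := ∑ x ∈ A, -(P x * Real.log (P x))
  set Tn := ∑' x : {x : Fin p → ℤ // x ∉ A}, -(Pn n x.1 * Real.log (Pn n x.1))
  set T := ∑' x : {x : Fin p → ℤ // x ∉ A}, -(P x.1 * Real.log (P x.1))
  have h10 : |Tn - T| ≤ ε / 4 := by
    rw [abs_le]
    constructor <;> [linarith [hTn n, hTle]; linarith [hT0, hTnle n]]
  have h11 : Sn + Tn - (S + T) = (Sn - S) + (Tn - T) := by ring
  rw [h11]
  calc |(Sn - S) + (Tn - T)| ≤ |Sn - S| + |Tn - T| := abs_add_le _ _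
    _ < ε := by linarith
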